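/- arXiv:2503.23749 — 4 statements merged into one kernel-verified Lean document; each statement's English description precedes it below -/
import Mathlib

section
/- Let V be a vector space over ℂ, Φ ⊆ V* a set of linear functionals such that ⋂_{φ ∈ Φ} ker(φ) = 0, W ⊆ V a linear subspace, and n a positive integer. Then dim W < n if and only if det((φᵢ(wⱼ))_{1 ≤ i,j ≤ n}) = 0 for every choice of vectors w₁, …, wₙ ∈ W and functionals φ₁, …, φₙ ∈ Φ. -/
/-- Let `V` be a `ℂ`-vector space, `Φ` a set of linear functionals on `V`
with `⋂_{φ ∈ Φ} ker φ = 0`, `W ⊆ V` a subspace and `n` a positive integer.  Then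
`dim W < n` iff `det (φᵢ (wⱼ)) = 0` for all `w₁, …, wₙ ∈ W` and `φ₁, …, φₙ ∈ Φ`. -/
theorem stmt0 (V : Type*) [AddCommGroup V] [Module ℂ V]
    (Φ : Set (V →ₗ[ℂ] ℂ)) (hΦ : (⨅ φ ∈ Φ, LinearMap.ker φ) = ⊥)
    (W : Submodule ℂ V) (n : ℕ) (hn : 0 < n) :
    Module.rank ℂ W < (n : Cardinal) ↔
      ∀ (w : Fin n → V) (φ : Fin n → (V →ₗ[ℂ] ℂ)),
        (∀ i, w i ∈ W) → (∀ i, φ i ∈ Φ) →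
        Matrix.det (Matrix.of fun i j : Fin n => φ i (w j)) = 0 := by
  constructor
  · intro hrank w φ hw hφm
    have hdep : ¬ LinearIndependent ℂ w := by
      intro hli
      have hli' : LinearIndependent ℂ (fun i => (⟨w i, hw i⟩ : W)) := by
        have heq : w = (W.subtype : W →ₗ[ℂ] V) ∘ (fun i => (⟨w i, hw i⟩ : W)) := rfl
        rw [heq] at hli
        exact LinearIndependent.of_comp _ hli
      have h2 := hli'.cardinal_lift_le_rank
      rw [Cardinal.mk_fin] at h2
      simp only [Cardinal.lift_natCast, Cardinal.lift_id'] at h2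
      exact absurd hrank (not_lt.2 h2)
    rw [linearIndependent_iff'] at hdep
    push_neg at hdep
    obtain ⟨s, g, hsum, i0, hi0s, hg0⟩ := hdep
    classical
    set v : Fin n → ℂ := fun j => if j ∈ s then g j else 0 with hv_def
    have hv : v ≠ 0 := by
      intro h
      apply hg0
      have := congrFun h i0
      simpa [hv_def, hi0s] using this
    rw [← Matrix.exists_mulVec_eq_zero_iff]
    refine ⟨v, hv, ?_⟩
    funext i
    have hsum' : (∑ j, v j • w j) = 0 := by
      rw [← hsum]
      rw [← Finset.sum_subset (Finset.subset_univ s)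
        (fun j _ hj => by simp [hv_def, hj])]
      exact Finset.sum_congr rfl fun j hj => by simp [hv_def, hj]
    have : (φ i) (∑ j, v j • w j) = 0 := by rw [hsum']; simp
    simp only [map_sum, map_smul] at this
    simp only [Matrix.mulVec, dotProduct, Matrix.of_apply, Pi.zero_apply]
    rw [← this]
    exact Finset.sum_congr rfl fun j _ => by rw [smul_eq_mul, mul_comm]
  · intro hdet
    by_contra hrank
    rw [not_lt] at hrank
    obtain ⟨s, hcard, hli⟩ :=
      le_rank_iff_exists_linearIndependent_finset.mp hrank
    classical
    have e : Fin n ≃ (s : Set W) := (s.equivFin.trans (finCongr hcard)).symm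
    set w : Fin n → V := fun i => ((e i : W) : V) with hw_def
    have hwmem : ∀ i, w i ∈ W := fun i => (e i : W).2
    have hliw : LinearIndependent ℂ w := by
      have h1 : LinearIndependent ℂ (fun x : (s : Set W) => ((x : W) : V)) :=
        hli.map' W.subtype W.ker_subtype
      exact h1.comp e e.injective
    -- rows
    set S : Set (Fin n → ℂ) := (fun ψ : V →ₗ[ℂ] ℂ => fun j => ψ (w j)) '' Φ with hS_def
    have hspan : Submodule.span ℂ S = ⊤ := by
      by_contra hne
      obtain ⟨f, hf0, hker⟩ :=
        Submodule.exists_dual_map_eq_bot_of_lt_top (lt_top_iff_ne_top.mpr hne) inferInstance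
      set c : Fin n → ℂ := fun j => f (Pi.single j 1) with hc_def
      have hfx : ∀ x : Fin n → ℂ, f x = ∑ j, x j * c j := by
        intro x
        rw [LinearMap.pi_apply_eq_sum_univ f x]
        refine Finset.sum_congr rfl fun j _ => ?_
        simp only [smul_eq_mul, hc_def]
        have hps : (fun j_1 => if j = j_1 then (1 : ℂ) else 0) = Pi.single j 1 := by
          funext k; simp [Pi.single_apply, eq_comm]
        rw [hps]
      have hu : (∑ j, c j • w j) = 0 := by
        have hmem : (∑ j, c j • w j) ∈ ⨅ φ ∈ Φ, LinearMap.ker φ := by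
          simp only [Submodule.mem_iInf]
          intro ψ hψ
          rw [LinearMap.mem_ker, map_sum]
          have hrow : (fun j => ψ (w j)) ∈ S := ⟨ψ, hψ, rfl⟩
          have : f (fun j => ψ (w j)) = 0 := by
            have : f (fun j => ψ (w j)) ∈ Submodule.map f (Submodule.span ℂ S) :=
              ⟨_, Submodule.subset_span hrow, rfl⟩
            rw [hker] at this
            simpa using this
          rw [hfx] at this
          rw [← this]
          exact Finset.sum_congr rfl fun j _ => by simp [mul_comm]
        rw [hΦ] at hmem
        simpa using hmem
      have hc0 : ∀ j, c j = 0 := fun j =>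
        linearIndependent_iff'.mp hliw Finset.univ c hu j (Finset.mem_univ j)
      apply hf0
      refine LinearMap.ext fun x => ?_
      rw [hfx]
      simp [hc0]
    obtain ⟨b, hbS, hbspan, hbli⟩ := exists_linearIndependent ℂ S
    rw [hspan] at hbspan
    have B : Module.Basis b ℂ (Fin n → ℂ) := Module.Basis.mk hbli (by rw [Subtype.range_coe, hbspan])
    have e2 : b ≃ Fin n := B.indexEquiv (Pi.basisFun ℂ (Fin n))
    set r : Fin n → (Fin n → ℂ) := fun i => ((e2.symm i : b) : Fin n → ℂ) with hr_def
    have hlir : LinearIndependent ℂ r :=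
      hbli.comp e2.symm e2.symm.injective
    have hchoice : ∀ i, ∃ ψ ∈ Φ, (fun j => ψ (w j)) = r i := by
      intro i
      have : r i ∈ S := hbS (e2.symm i).2
      obtain ⟨ψ, hψ, hψ2⟩ := this
      exact ⟨ψ, hψ, hψ2⟩
    choose φ hφΦ hφr using hchoice
    have hd := hdet w φ hwmem hφΦ
    rw [← Matrix.exists_vecMul_eq_zero_iff] at hd
    obtain ⟨v, hv0, hv⟩ := hd
    apply hv0
    have : (∑ i, v i • r i) = 0 := by
      funext j
      have := congrFun hv j
      simp only [Matrix.vecMul, dotProduct, Matrix.of_apply, Pi.zero_apply,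
        Matrix.transpose_apply] at this ⊢
      rw [← this]
      simp only [Finset.sum_apply, Pi.smul_apply, smul_eq_mul]
      exact Finset.sum_congr rfl fun i _ => by rw [← hφr i]
    have := linearIndependent_iff'.mp hlir Finset.univ v (by simpa using this)
    funext i
    exact this i (Finset.mem_univ i)
end

section
/- Let A be a noetherian ℂ-algebra of at most countable dimension and let {Mᵢ}_{i ∈ I} be a family of irreducible (simple) A-modules. Then PIdeg(A) ≥ sup{dim_ℂ(Mᵢ) : i ∈ I}, and equality holds if ⋂_{i ∈ I} Ann_A(Mᵢ) = 0. -/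
/-- A noncommutative polynomial with integer coefficients (an element of the free
`ℤ`-algebra on countably many generators) is a polynomial identity of `A` if every
evaluation of it in `A` vanishes. -/
def IsPolyIdentity (A : Type*) [Ring A] (f : FreeAlgebra ℤ ℕ) : Prop :=
  ∀ σ : ℕ → A, FreeAlgebra.lift ℤ σ f = 0

/-- `PI(A)`: the set of all polynomial identities of `A`. -/
def PIset (A : Type*) [Ring A] : Set (FreeAlgebra ℤ ℕ) := {f | IsPolyIdentity A f}

/-- `PIdeg(A)`: the supremum of the `n ∈ ℕ` such that `PI(A) ⊆ PI(Mₙ(ℂ))`,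
as an element of `ℕ ∪ {∞}`. -/
noncomputable def PIdeg (A : Type*) [Ring A] : ℕ∞ :=
  ⨆ n ∈ {n : ℕ | PIset A ⊆ PIset (Matrix (Fin n) (Fin n) ℂ)}, (n : ℕ∞)

/-- The standard polynomial `sₙ = Σ_{w ∈ Sₙ} sgn(w) X_{w(1)} ⋯ X_{w(n)}`, on the
indeterminates indexed by `0, …, n-1`. -/
noncomputable def stdPoly (n : ℕ) : FreeAlgebra ℤ ℕ :=
  ∑ w : Equiv.Perm (Fin n),
    ((Equiv.Perm.sign w : ℤˣ) : ℤ) • (List.ofFn fun i : Fin n => FreeAlgebra.ι ℤ (w i : ℕ)).prod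

/-- `J(A)^C = 0`: every product of `C` elements of the Jacobson radical of `A` vanishes. -/
def JacobsonPowZero (A : Type*) [Ring A] (C : ℕ) : Prop :=
  ∀ a : Fin C → A, (∀ i, a i ∈ Ideal.jacobson (⊥ : Ideal A)) → (List.ofFn a).prod = 0



section PIlemmas


theorem lift_comp_hom {A B : Type*} [Ring A] [Ring B] (φ : A →+* B) (σ : ℕ → A)
    (f : FreeAlgebra ℤ ℕ) :
    φ (FreeAlgebra.lift ℤ σ f) = FreeAlgebra.lift ℤ (fun n => φ (σ n)) f := by
  have h : (φ.toIntAlgHom.comp (FreeAlgebra.lift ℤ σ)) = FreeAlgebra.lift ℤ (fun n => φ (σ n)) := by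
    apply FreeAlgebra.hom_ext
    funext n
    simp [FreeAlgebra.lift_ι_apply]
  exact congrArg (fun g => g f) (congrArg DFunLike.coe h) |>.trans rfl

theorem PIset_le_of_injective {B C : Type*} [Ring B] [Ring C] (φ : B →+* C)
    (hφ : Function.Injective φ) : PIset C ⊆ PIset B := by
  intro f hf σ
  apply hφ
  rw [map_zero, lift_comp_hom]
  exact hf _

theorem PIset_le_of_surjective {B C : Type*} [Ring B] [Ring C] (φ : B →+* C)
    (hφ : Function.Surjective φ) : PIset B ⊆ PIset C := by
  intro f hf σ
  choose τ hτ using fun n => hφ (σ n)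
  have h2 := lift_comp_hom φ τ f
  rw [hf τ, map_zero] at h2
  have : (fun n => φ (τ n)) = σ := funext hτ
  rw [this] at h2
  exact h2.symm

theorem PIset_pi {κ : Type*} (B : κ → Type*) [∀ i, Ring (B i)] (f : FreeAlgebra ℤ ℕ)
    (h : ∀ i, f ∈ PIset (B i)) : f ∈ PIset (∀ i, B i) := by
  intro σ
  funext i
  have h2 := lift_comp_hom (Pi.evalRingHom B i) σ f
  have h3 := h i (fun n => σ n i)
  exact h2.trans h3 |>.trans (by simp)


end PIlemmas



section Capelli
open Matrix


noncomputable def capelli (k : ℕ) : FreeAlgebra ℤ ℕ :=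
  ∑ w : Equiv.Perm (Fin k),
    ((Equiv.Perm.sign w : ℤˣ) : ℤ) •
      (List.ofFn fun i : Fin k =>
        FreeAlgebra.ι ℤ (2 * (w i : ℕ)) * FreeAlgebra.ι ℤ (2 * (i : ℕ) + 1)).prod

theorem capelli_eval {B : Type*} [Ring B] (k : ℕ) (σ : ℕ → B) :
    FreeAlgebra.lift ℤ σ (capelli k) =
      ∑ w : Equiv.Perm (Fin k),
        ((Equiv.Perm.sign w : ℤˣ) : ℤ) •
          (List.ofFn fun i : Fin k => σ (2 * (w i : ℕ)) * σ (2 * (i : ℕ) + 1)).prod := by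
  rw [capelli, map_sum]
  refine Finset.sum_congr rfl fun w _ => ?_
  rw [map_zsmul, map_list_prod]
  congr 1
  rw [List.map_ofFn]
  refine congrArg (fun l => List.prod (List.ofFn l)) (funext fun i => ?_)
  simp [Function.comp, FreeAlgebra.lift_ι_apply]

theorem capelli_identity {B : Type*} [Ring B] [Algebra ℂ B] (k : ℕ)
    (hB : Module.rank ℂ B < (k : Cardinal)) : capelli k ∈ PIset B := by
  intro σ
  rw [capelli_eval]
  classical
  -- recognize as an alternatization
  set G : MultilinearMap ℂ (fun _ : Fin k => B) B :=
    (MultilinearMap.mkPiAlgebraFin ℂ k B).compLinearMap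
      (fun i => LinearMap.mulRight ℂ (σ (2 * (i : ℕ) + 1))) with hG
  have hdep : ¬ LinearIndependent ℂ (fun j : Fin k => σ (2 * (j : ℕ))) := by
    intro hind
    have := hind.cardinal_lift_le_rank
    simp only [Cardinal.mk_fin, Cardinal.lift_natCast, Cardinal.lift_id] at this
    exact absurd (this.trans_lt (by simpa using hB)) (lt_irrefl _)
  have halt := (MultilinearMap.alternatization G).map_linearDependent
    (fun j : Fin k => σ (2 * (j : ℕ))) hdep
  rw [MultilinearMap.alternatization_apply] at halt
  rw [← halt]
  refine Finset.sum_congr rfl fun w _ => ?_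
  rw [MultilinearMap.domDomCongr_apply]
  simp only [hG, MultilinearMap.compLinearMap_apply, MultilinearMap.mkPiAlgebraFin_apply]
  rw [Units.smul_def]
  congr 1

theorem chainProd {n : ℕ} : ∀ (m : ℕ) (p q : Fin (m + 1) → Fin n),
    (List.ofFn fun i : Fin (m + 1) => Matrix.single (p i) (q i) (1 : ℂ)).prod =
      if ∀ i : Fin m, q i.castSucc = p i.succ then Matrix.single (p 0) (q (Fin.last m)) 1
      else 0 := by
  intro m
  induction m with
  | zero =>
    intro p q
    rw [if_pos (fun i => i.elim0)]
    simp
  | succ m ih =>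
    intro p q
    rw [List.ofFn_succ]
    simp only [List.prod_cons]
    have htail : (List.ofFn fun i : Fin (m + 1) => Matrix.single (p i.succ) (q i.succ) (1 : ℂ)).prod =
        if ∀ i : Fin m, q (i.succ).castSucc = p (i.succ).succ then
          Matrix.single (p (Fin.succ 0)) (q (Fin.last m).succ) 1
        else 0 := by
      have h := ih (fun i => p i.succ) (fun i => q i.succ)
      rw [h]
      have hcond : (∀ i : Fin m, q (i.castSucc).succ = p (i.succ).succ) ↔
          (∀ i : Fin m, q (i.succ).castSucc = p (i.succ).succ) := by
        constructor
        · intro h i; rw [← Fin.succ_castSucc]; exact h i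
        · intro h i; rw [Fin.succ_castSucc]; exact h i
      by_cases hc : ∀ i : Fin m, q (i.succ).castSucc = p (i.succ).succ
      · rw [if_pos (hcond.mpr hc), if_pos hc]
      · rw [if_neg (fun hh => hc (hcond.mp hh)), if_neg hc]
    rw [htail]
    by_cases hall : ∀ i : Fin (m + 1), q i.castSucc = p i.succ
    · rw [if_pos hall]
      have h2 : ∀ i : Fin m, q (i.succ).castSucc = p (i.succ).succ := fun i => hall i.succ
      rw [if_pos h2]
      have h0 : q (Fin.castSucc 0) = p (Fin.succ 0) := hall 0
      rw [show (Fin.castSucc (0 : Fin (m+1))) = (0 : Fin (m+2)) from rfl] at h0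
      rw [h0, single_mul_single_same, one_mul]
      congr 1
    · rw [if_neg hall]
      push_neg at hall
      obtain ⟨i₀, hi₀⟩ := hall
      rcases Fin.eq_zero_or_eq_succ i₀ with h0 | ⟨j, rfl⟩
      · subst h0
        by_cases h2 : ∀ i : Fin m, q (i.succ).castSucc = p (i.succ).succ
        · rw [if_pos h2, single_mul_single_of_ne, ]
          exact hi₀
        · rw [if_neg h2, mul_zero]
      · have h2 : ¬ ∀ i : Fin m, q (i.succ).castSucc = p (i.succ).succ := fun h => hi₀ (h j)
        rw [if_neg h2, mul_zero]

theorem capelli_not_identity {n m : ℕ} (hkn : m + 1 ≤ n * n) :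
    ∃ σ : ℕ → Matrix (Fin n) (Fin n) ℂ, FreeAlgebra.lift ℤ σ (capelli (m + 1)) ≠ 0 := by
  classical
  set k := m + 1 with hk
  set e : Fin k → Fin n × Fin n := fun i => finProdFinEquiv.symm (Fin.castLE hkn i) with he
  have heinj : Function.Injective e := fun i j h => by
    apply Fin.castLE_injective hkn
    exact finProdFinEquiv.symm.injective h
  set a : Fin k → Fin n := fun i => (e i).1 with ha
  set b : Fin k → Fin n := fun i => (e i).2 with hb
  have hab : ∀ i j : Fin k, a i = a j → b i = b j → i = j := by
    intro i j h1 h2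
    exact heinj (Prod.ext h1 h2)
  set x : Fin k → Matrix (Fin n) (Fin n) ℂ := fun j => Matrix.single (a j) (b j) 1 with hx
  set y : Fin k → Matrix (Fin n) (Fin n) ℂ := fun j => Matrix.single (b j) (a (j + 1)) 1 with hy
  set σ : ℕ → Matrix (Fin n) (Fin n) ℂ := fun m' =>
    if m' % 2 = 0 then (if h : m' / 2 < k then x ⟨m' / 2, h⟩ else 0)
    else (if h : m' / 2 < k then y ⟨m' / 2, h⟩ else 0) with hσ
  have hσx : ∀ j : Fin k, σ (2 * (j : ℕ)) = x j := by
    intro j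
    have h1 : (2 * (j : ℕ)) % 2 = 0 := by omega
    have h2 : (2 * (j : ℕ)) / 2 = (j : ℕ) := by omega
    simp only [hσ, h2]
    rw [if_pos h1, dif_pos j.isLt]
  have hσy : ∀ j : Fin k, σ (2 * (j : ℕ) + 1) = y j := by
    intro j
    have h1 : (2 * (j : ℕ) + 1) % 2 ≠ 0 := by omega
    have h2 : (2 * (j : ℕ) + 1) / 2 = (j : ℕ) := by omega
    simp only [hσ, h2]
    rw [if_neg h1, dif_pos j.isLt]
  refine ⟨σ, ?_⟩
  rw [show FreeAlgebra.lift ℤ σ (capelli k) = _ from capelli_eval k σ]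
  -- the term of a permutation
  have hcastsucc : ∀ i : Fin m, (i.castSucc + (1 : Fin k)) = i.succ := by
    intro i
    apply Fin.ext
    rw [Fin.add_def]
    simp [Fin.val_one']
  have hterm : ∀ w : Equiv.Perm (Fin k),
      (List.ofFn fun i : Fin k => σ (2 * ((w i) : ℕ)) * σ (2 * (i : ℕ) + 1)).prod =
      if w = 1 then Matrix.single (a 0) (a 0) 1 else 0 := by
    intro w
    have hfac : ∀ i : Fin k, σ (2 * ((w i) : ℕ)) * σ (2 * (i : ℕ) + 1) =
        if b (w i) = b i then Matrix.single (a (w i)) (a (i + 1)) 1 else 0 := by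
      intro i
      simp only [hσx, hσy, hx, hy]
      by_cases hbi : b (w i) = b i
      · rw [if_pos hbi, hbi, single_mul_single_same, one_mul]
      · rw [if_neg hbi, single_mul_single_of_ne (h := hbi)]
    by_cases hball : ∀ i : Fin k, b (w i) = b i
    · have hfac' : (List.ofFn fun i : Fin k => σ (2 * ((w i) : ℕ)) * σ (2 * (i : ℕ) + 1)) =
          List.ofFn fun i : Fin k => Matrix.single (a (w i)) (a (i + 1)) (1 : ℂ) := by
        refine congrArg List.ofFn (funext fun i => ?_)
        rw [hfac i, if_pos (hball i)]
      rw [hfac']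
      rw [chainProd m (fun i => a (w i)) (fun i => a (i + 1))]
      by_cases hw : w = 1
      · subst hw
        rw [if_pos, if_pos rfl]
        · simp [Fin.last_add_one]
        · intro i
          simp only [Equiv.Perm.one_apply]
          rw [hcastsucc i]
      · rw [if_neg hw, if_neg]
        intro hcond
        apply hw
        have hfix : ∀ j : Fin k, w j = j := by
          have hsucc : ∀ i : Fin m, w i.succ = i.succ := by
            intro i
            have h1 := hcond i
            rw [hcastsucc i] at h1
            exact hab _ _ h1.symm (hball i.succ)
          intro j
          rcases Fin.eq_zero_or_eq_succ j with h0 | ⟨i, rfl⟩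
          · subst h0
            rcases Fin.eq_zero_or_eq_succ (w 0) with hw0 | ⟨i, hwi⟩
            · exact hw0
            · have h2 := hsucc i
              have h3 : w i.succ = w 0 := h2.trans hwi.symm
              exact absurd (w.injective h3) (Fin.succ_ne_zero i)
          · exact hsucc i
        exact Equiv.ext fun j => hfix j
    · push_neg at hball
      obtain ⟨i₀, hi₀⟩ := hball
      have hw : w ≠ 1 := by
        rintro rfl
        exact hi₀ rfl
      rw [if_neg hw]
      apply List.prod_eq_zero
      rw [List.mem_ofFn]
      refine ⟨i₀, ?_⟩
      show σ (2 * ((w i₀) : ℕ)) * σ (2 * (i₀ : ℕ) + 1) = 0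
      rw [hfac i₀, if_neg hi₀]
  -- only the identity contributes
  rw [Finset.sum_congr rfl (fun w _ => by rw [hterm w])]
  have hsum : ∑ w : Equiv.Perm (Fin k), ((Equiv.Perm.sign w : ℤˣ) : ℤ) •
      (if w = 1 then Matrix.single (a 0) (a 0) (1 : ℂ) else 0) =
      Matrix.single (a 0) (a 0) (1 : ℂ) := by
    rw [Finset.sum_eq_single (1 : Equiv.Perm (Fin k))]
    · simp
    · intro w _ hw
      rw [if_neg hw, smul_zero]
    · intro h
      exact absurd (Finset.mem_univ _) h
  rw [hsum]
  intro hzero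
  have := congrFun (congrFun hzero (a 0)) (a 0)
  rw [single_apply_same] at this
  simpa using this


end Capelli



section Simple
variable {A : Type*} [Ring A] [Algebra ℂ A]
variable {M : Type*} [AddCommGroup M] [Module A M] [Module ℂ M] [IsScalarTower ℂ A M]


theorem smulCommClass_of_tower : SMulCommClass ℂ A M := by
  constructor
  intro c a m
  rw [← algebraMap_smul A c m, ← algebraMap_smul A c (a • m), ← mul_smul, ← mul_smul,
    Algebra.commutes]

theorem rank_le_of_simple [IsSimpleModule A M] (hcount : Module.rank ℂ A ≤ Cardinal.aleph0) :
    Module.rank ℂ M ≤ Cardinal.aleph0 := by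
  haveI := IsSimpleModule.nontrivial A M
  obtain ⟨m₀, hm₀⟩ := exists_ne (0 : M)
  have hsurj := IsSimpleModule.toSpanSingleton_surjective A hm₀
  haveI := smulCommClass_of_tower (A := A) (M := M)
  let ℓ : A →ₗ[ℂ] M :=
    { toFun := fun a => a • m₀
      map_add' := fun a b => add_smul a b m₀
      map_smul' := fun c a => by simp [smul_assoc] }
  have hsurj' : Function.Surjective ℓ := hsurj
  have h := ℓ.lift_rank_le_of_surjective hsurj'
  have h2 : Cardinal.lift.{u_1, u_2} (Module.rank ℂ M) ≤ Cardinal.aleph0 :=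
    h.trans (by rwa [Cardinal.lift_le_aleph0])
  rwa [Cardinal.lift_le_aleph0] at h2

theorem dixmier [IsSimpleModule A M] (hM : Module.rank ℂ M ≤ Cardinal.aleph0)
    (φ : Module.End A M) : ∃ c : ℂ, φ = algebraMap ℂ (Module.End A M) c := by
  haveI := smulCommClass_of_tower (A := A) (M := M)
  haveI := IsSimpleModule.nontrivial A M
  by_contra hc
  push_neg at hc
  -- every φ - c is a unit
  have hunit : ∀ c : ℂ, IsUnit (φ - algebraMap ℂ (Module.End A M) c) := by
    intro c
    have hne : φ - algebraMap ℂ (Module.End A M) c ≠ 0 := sub_ne_zero.mpr (hc c)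
    have := (φ - algebraMap ℂ (Module.End A M) c).bijective_or_eq_zero.resolve_right hne
    exact (Module.End.isUnit_iff _).mpr this
  obtain ⟨m₀, hm₀⟩ := exists_ne (0 : M)
  set ψ : ℂ → Module.End A M := fun c => ↑(hunit c).unit⁻¹ with hψ
  -- key : the family c ↦ ψ c m₀ is linearly independent over ℂ
  have hind : LinearIndependent ℂ (fun c : ℂ => (ψ c) m₀) := by
    rw [linearIndependent_iff']
    intro s g hsum c₀ hc₀
    -- χ := ∑ g c • ψ c kills m₀
    set χ : Module.End A M := ∑ c ∈ s, g c • ψ c with hχ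
    have hχm₀ : χ m₀ = 0 := by
      rw [hχ]
      simpa [LinearMap.sum_apply, LinearMap.smul_apply] using hsum
    have hχ0 : χ = 0 := by
      rcases χ.bijective_or_eq_zero with hb | h0
      · exact absurd (hb.injective (by simpa using hχm₀)) hm₀
      · exact h0
    -- multiply by ∏ (φ - c)
    by_contra hg
    set p : Polynomial ℂ := ∑ c ∈ s, Polynomial.C (g c) *
      ∏ c' ∈ s.erase c, (Polynomial.X - Polynomial.C c') with hp
    have haeval : Polynomial.aeval φ p = 0 := by
      have : Polynomial.aeval φ p = χ * Polynomial.aeval φ (∏ c ∈ s, (Polynomial.X - Polynomial.C c)) := by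
        rw [hχ, hp, map_sum, Finset.sum_mul]
        refine Finset.sum_congr rfl fun c hcs => ?_
        rw [map_mul, ← Finset.mul_prod_erase s _ hcs, map_mul]
        simp only [Polynomial.aeval_C, map_sub, Polynomial.aeval_X]
        rw [Algebra.smul_def, mul_assoc]
        congr 1
        have h1 : (ψ c) * (φ - algebraMap ℂ (Module.End A M) c) = 1 := (hunit c).unit.inv_mul
        rw [← mul_assoc, h1, one_mul]
      rw [this, hχ0, zero_mul]
    have hpne : p ≠ 0 := by
      intro h0
      have : Polynomial.eval c₀ p = 0 := by rw [h0]; simp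
      rw [hp] at this
      simp only [Polynomial.eval_finset_sum, Polynomial.eval_mul, Polynomial.eval_C,
        Polynomial.eval_prod, Polynomial.eval_sub, Polynomial.eval_X] at this
      rw [Finset.sum_eq_single c₀] at this
      · rcases mul_eq_zero.mp this with h | h
        · exact hg h
        · obtain ⟨c', hc', hcc'⟩ := Finset.prod_eq_zero_iff.mp h
          exact Finset.ne_of_mem_erase hc' (sub_eq_zero.mp hcc').symm
      · intro c hcs hne
        have : c₀ ∈ s.erase c := Finset.mem_erase.mpr ⟨(Ne.symm hne), hc₀⟩
        rw [Finset.prod_eq_zero this (by simp), mul_zero]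
      · intro h; exact absurd hc₀ h
    -- p ≠ 0 but aeval φ p = 0 and aeval φ p is a unit
    have hroots : p = Polynomial.C p.leadingCoeff *
        (p.roots.map fun r => Polynomial.X - Polynomial.C r).prod :=
      (IsAlgClosed.splits p).eq_prod_roots
    have hu : IsUnit (Polynomial.aeval φ p) := by
      rw [hroots, map_mul, Polynomial.aeval_C]
      apply IsUnit.mul
      · exact (IsUnit.map (algebraMap ℂ (Module.End A M)) (isUnit_iff_ne_zero.mpr
          (Polynomial.leadingCoeff_ne_zero.mpr hpne)))
      · have : ∀ t : Multiset ℂ, IsUnit (Polynomial.aeval φ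
            ((t.map fun r => Polynomial.X - Polynomial.C r).prod)) := by
          intro t
          induction t using Multiset.induction with
          | empty => simp
          | cons r t ih =>
            rw [Multiset.map_cons, Multiset.prod_cons, map_mul]
            exact IsUnit.mul (by simpa using hunit r) ih
        exact this p.roots
    rw [haeval] at hu
    exact not_isUnit_zero hu
  -- independent family of size continuum in countable-dim space
  have hcard := hind.cardinal_lift_le_rank
  rw [Cardinal.mk_complex] at hcard
  have hM' : Cardinal.lift.{0} (Module.rank ℂ M) ≤ Cardinal.lift.{0} Cardinal.aleph0 :=
    Cardinal.lift_le.mpr hM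
  have h2 := hcard.trans hM'
  rw [Cardinal.lift_aleph0, Cardinal.lift_continuum] at h2
  exact absurd h2 (not_le.mpr (Cardinal.aleph0_lt_continuum))

theorem pi_semisimple [IsSimpleModule A M] (n : ℕ) :
    IsSemisimpleModule A (Fin n → M) := by
  apply isSemisimpleModule_of_isSemisimpleModule_submodule'
    (p := fun k : Fin n => LinearMap.range (LinearMap.single A (fun _ : Fin n => M) k))
  · intro k
    have hinj : Function.Injective (LinearMap.single A (fun _ : Fin n => M) k) := by
      intro x y h
      have h2 := congrFun h k
      simpa [LinearMap.single_apply] using h2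
    exact IsSemisimpleModule.congr (LinearEquiv.ofInjective _ hinj).symm
  · rw [eq_top_iff]
    intro x _
    have hx : x = ∑ k : Fin n, Pi.single k (x k) := (Finset.univ_sum_single x).symm
    rw [hx]
    apply Submodule.sum_mem
    intro k _
    exact Submodule.mem_iSup_of_mem k ⟨x k, rfl⟩

theorem density [IsSimpleModule A M] (hM : Module.rank ℂ M ≤ Cardinal.aleph0)
    {n : ℕ} (v : Fin n → M) (hv : LinearIndependent ℂ v) (w : Fin n → M) :
    ∃ a : A, ∀ j, a • v j = w j := by
  haveI := smulCommClass_of_tower (A := A) (M := M)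
  haveI := pi_semisimple (A := A) (M := M) n
  classical
  -- the cyclic submodule generated by v
  set Ψ : A →ₗ[A] (Fin n → M) := LinearMap.pi (fun j => LinearMap.toSpanSingleton A M (v j))
    with hΨ
  set N : Submodule A (Fin n → M) := LinearMap.range Ψ with hN
  obtain ⟨N', hcompl⟩ := exists_isCompl N
  set e : (Fin n → M) →ₗ[A] (Fin n → M) :=
    N.subtype.comp (N.projectionOnto N' hcompl) with he
  have heN : ∀ x ∈ N, e x = x := fun x hx => by
    simp [he, Submodule.projectionOnto_apply_left hcompl ⟨x, hx⟩]
  have heNmem : ∀ x, e x ∈ N := fun x => (N.projectionOnto N' hcompl x).2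
  set D : (Fin n → M) →ₗ[A] (Fin n → M) := LinearMap.id - e with hD
  -- entries of (id - e)
  set g : Fin n → Fin n → Module.End A M := fun j k =>
    (LinearMap.proj j).comp (D.comp (LinearMap.single A (fun _ : Fin n => M) k))
    with hg
  choose c hc using fun j k => dixmier (A := A) (M := M) hM (g j k)
  have hvN : v ∈ N := ⟨1, by funext j; simp [hΨ, LinearMap.pi_apply]⟩
  have hveq : ∀ x : Fin n → M, ∀ j, x j - e x j = ∑ k, c j k • x k := by
    intro x j
    have hx : x = ∑ k : Fin n, Pi.single k (x k) := (Finset.univ_sum_single x).symm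
    calc x j - e x j = (D x) j := by simp [hD]
      _ = (D (∑ k : Fin n, Pi.single k (x k))) j := by rw [← hx]
      _ = ∑ k, (D (Pi.single k (x k))) j := by rw [map_sum]; simp
      _ = ∑ k, g j k (x k) := rfl
      _ = ∑ k, c j k • x k := by
          refine Finset.sum_congr rfl fun k _ => ?_
          rw [hc j k]
          simp [Module.algebraMap_end_eq_smul_id]
  -- v is fixed by e, so the coefficients vanish
  have hczero : ∀ j k, c j k = 0 := by
    have h0 : ∀ j, (0 : M) = ∑ k, c j k • v k := by
      intro j
      have := hveq v j
      rwa [heN v hvN, sub_self] at this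
    intro j k
    exact Fintype.linearIndependent_iff.mp hv (c j) (h0 j).symm k
  -- hence e = id and w ∈ N
  have hwN : w ∈ N := by
    have : ∀ j, w j - e w j = 0 := by
      intro j
      rw [hveq w j]
      simp [hczero]
    have hew : e w = w := by funext j; exact (sub_eq_zero.mp (this j)).symm
    rw [← hew]; exact heNmem w
  obtain ⟨a, ha⟩ := hwN
  exact ⟨a, fun j => congrFun ha j⟩

theorem PIset_le_matrix [IsSimpleModule A M] (hM : Module.rank ℂ M ≤ Cardinal.aleph0)
    {n : ℕ} (hn : (n : Cardinal) ≤ Module.rank ℂ M) :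
    PIset A ⊆ PIset (Matrix (Fin n) (Fin n) ℂ) := by
  haveI := smulCommClass_of_tower (A := A) (M := M)
  obtain ⟨v, hv⟩ := exists_linearIndependent_of_le_rank hn
  set V : Submodule ℂ M := Submodule.span ℂ (Set.range v) with hV
  -- the stabilizer subalgebra
  set B : Subalgebra ℂ A :=
    { carrier := {a : A | ∀ m ∈ V, a • m ∈ V}
      mul_mem' := fun {a b} ha hb m hm => by rw [mul_smul]; exact ha _ (hb _ hm)
      add_mem' := fun {a b} ha hb m hm => by rw [add_smul]; exact V.add_mem (ha m hm) (hb m hm)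
      algebraMap_mem' := fun c m hm => by rw [algebraMap_smul]; exact V.smul_mem c hm } with hB
  -- the representation of B on V
  have hsmul_lin : ∀ a : A, ∀ (c : ℂ) (x y : M), a • (x + y) = a • x + a • y ∧
      a • (c • x) = c • (a • x) := fun a c x y => ⟨smul_add a x y, smul_comm c a x ▸ rfl⟩
  set Φ : B →+* Module.End ℂ V :=
    { toFun := fun a =>
        { toFun := fun m => ⟨(a : A) • (m : M), a.2 m.1 m.2⟩
          map_add' := fun x y => Subtype.ext (smul_add (a : A) x.1 y.1)
          map_smul' := fun c x => Subtype.ext (smul_comm (a : A) c x.1) }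
      map_one' := by ext m; exact one_smul A m.1
      map_mul' := fun a b => by ext m; exact mul_smul (a : A) (b : A) m.1
      map_zero' := by ext m; exact zero_smul A m.1
      map_add' := fun a b => by ext m; exact add_smul (a : A) (b : A) m.1 } with hΦ
  have hΦsurj : Function.Surjective Φ := by
    intro T
    set bV : Module.Basis (Fin n) ℂ V := Module.Basis.span hv with hbV
    obtain ⟨a, ha⟩ := density (A := A) hM v hv (fun j => (T (bV j) : M))
    have haB : a ∈ B := by
      intro m hm
      induction hm using Submodule.span_induction with
      | mem x hx =>
        obtain ⟨j, rfl⟩ := hx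
        rw [ha j]; exact (T (bV j)).2
      | zero => rw [smul_zero]; exact V.zero_mem
      | add x y _ _ hx hy => rw [smul_add]; exact V.add_mem hx hy
      | smul c x _ hx => rw [smul_comm]; exact V.smul_mem c hx
    refine ⟨⟨a, haB⟩, ?_⟩
    apply bV.ext
    intro j
    apply Subtype.ext
    have hbVj : (bV j : M) = v j := congrArg Subtype.val (Module.Basis.span_apply hv j)
    show (a : A) • (bV j : M) = (T (bV j) : M)
    rw [hbVj, ha j]
  -- assemble
  intro f hf
  have h1 : f ∈ PIset B := PIset_le_of_injective (Subalgebra.val B).toRingHom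
    Subtype.val_injective hf
  have h2 : f ∈ PIset (Module.End ℂ V) := PIset_le_of_surjective Φ hΦsurj h1
  set bV : Module.Basis (Fin n) ℂ V := Module.Basis.span hv
  exact PIset_le_of_surjective (algEquivMatrix bV).toRingEquiv.toRingHom
    (algEquivMatrix bV).surjective h2


end Simple


theorem enat_le_of_forall_nat {x y : ℕ∞} (h : ∀ n : ℕ, (n : ℕ∞) ≤ x → (n : ℕ∞) ≤ y) : x ≤ y := by
  induction x using ENat.recTopCoe with
  | top =>
    induction y using ENat.recTopCoe with
    | top => exact le_rfl
    | coe m =>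
      have := h (m + 1) le_top
      rw [Nat.cast_le] at this
      omega
  | coe n => exact h n le_rfl


/-- For a noetherian `ℂ`-algebra `A` of at most countable dimension and a
family `{Mᵢ}` of simple `A`-modules, `PIdeg(A) ≥ sup dim_ℂ Mᵢ`, with equality when
`⋂ Ann_A(Mᵢ) = 0`. -/

theorem stmt1 (A : Type*) [Ring A] [Algebra ℂ A] [IsNoetherianRing A]
    (hcount : Module.rank ℂ A ≤ Cardinal.aleph0)
    (ι : Type*) (M : ι → Type*) [∀ i, AddCommGroup (M i)] [∀ i, Module A (M i)]
    [∀ i, Module ℂ (M i)] [∀ i, IsScalarTower ℂ A (M i)]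
    (hsimple : ∀ i, IsSimpleModule A (M i)) :
    (⨆ i, Cardinal.toENat (Module.rank ℂ (M i))) ≤ PIdeg A ∧
      ((⨅ i, Module.annihilator A (M i)) = ⊥ →
        PIdeg A = ⨆ i, Cardinal.toENat (Module.rank ℂ (M i))) := by
  haveI := hsimple
  have hmem_le : ∀ n : ℕ, PIset A ⊆ PIset (Matrix (Fin n) (Fin n) ℂ) → (n : ℕ∞) ≤ PIdeg A := by
    intro n hn
    exact le_iSup₂ (f := fun (n : ℕ) (_ : n ∈ {n : ℕ | PIset A ⊆ PIset (Matrix (Fin n) (Fin n) ℂ)}) => (n : ℕ∞)) n hn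
  have hge : (⨆ i, Cardinal.toENat (Module.rank ℂ (M i))) ≤ PIdeg A := by
    apply iSup_le
    intro i
    apply enat_le_of_forall_nat
    intro n hn
    rw [Cardinal.natCast_le_toENat_iff] at hn
    exact hmem_le n (PIset_le_matrix (rank_le_of_simple (A := A) (M := M i) hcount) hn)
  refine ⟨hge, fun hfaith => ?_⟩
  by_cases htop : (⨆ i, Cardinal.toENat (Module.rank ℂ (M i))) = ⊤
  · rw [htop]
    exact le_antisymm le_top (htop ▸ hge)
  · obtain ⟨d, hd'⟩ := WithTop.ne_top_iff_exists.mp htop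
    have hd : ((d : ℕ) : ℕ∞) = ⨆ i, Cardinal.toENat (Module.rank ℂ (M i)) := by
      exact_mod_cast hd'
    refine le_antisymm ?_ hge
    -- the action map into the product of endomorphism algebras
    haveI : ∀ i, SMulCommClass ℂ A (M i) := fun i => smulCommClass_of_tower
    set Φ : A →+* ∀ i, Module.End ℂ (M i) := Pi.ringHom fun i =>
      { toFun := fun a =>
          { toFun := fun m => a • m
            map_add' := fun x y => smul_add a x y
            map_smul' := fun c x => smul_comm a c x }
        map_one' := by ext m; exact one_smul A m
        map_mul' := fun a b => by ext m; exact mul_smul a b m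
        map_zero' := by ext m; exact zero_smul A m
        map_add' := fun a b => by ext m; exact add_smul a b m } with hΦ
    have hΦinj : Function.Injective Φ := by
      rw [injective_iff_map_eq_zero]
      intro a ha
      have hann : ∀ i, a ∈ Module.annihilator A (M i) := by
        intro i
        rw [Module.mem_annihilator]
        intro m
        exact congrFun (congrArg DFunLike.coe (congrFun ha i)) m
      have : a ∈ (⨅ i, Module.annihilator A (M i)) := Submodule.mem_iInf _ |>.mpr hann
      rwa [hfaith, Submodule.mem_bot] at this
    -- the capelli polynomial of degree d*d+1 is an identity of A
    have hcap : capelli (d * d + 1) ∈ PIset A := by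
      apply PIset_le_of_injective Φ hΦinj
      apply PIset_pi
      intro i
      apply capelli_identity
      -- rank of End ℂ (M i) is at most d*d
      have hrank_le : Module.rank ℂ (M i) ≤ (d : Cardinal) := by
        have h1 : Cardinal.toENat (Module.rank ℂ (M i)) ≤ (d : ℕ∞) :=
          (le_iSup (fun i => Cardinal.toENat (Module.rank ℂ (M i))) i).trans_eq hd.symm
        rwa [Cardinal.toENat_le_nat] at h1
      haveI : Module.Finite ℂ (M i) :=
        Module.rank_lt_aleph0_iff.mp (hrank_le.trans_lt (Cardinal.nat_lt_aleph0 d))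
      have hfr : Module.finrank ℂ (M i) ≤ d := Module.finrank_le_of_rank_le hrank_le
      have hEnd : Module.rank ℂ (Module.End ℂ (M i)) =
          ((Module.finrank ℂ (M i) * Module.finrank ℂ (M i) : ℕ) : Cardinal) := by
        rw [← Module.finrank_eq_rank, Module.finrank_linearMap]
      rw [hEnd]
      rw [Nat.cast_lt]
      have : Module.finrank ℂ (M i) * Module.finrank ℂ (M i) ≤ d * d :=
        Nat.mul_le_mul hfr hfr
      omega
    -- conclude : every n in the defining set is at most d
    rw [← hd]
    apply iSup₂_le
    intro n hn
    suffices hle : n ≤ d by exact_mod_cast hle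
    by_contra hnd
    push_neg at hnd
    have hkn : d * d + 1 ≤ n * n := by nlinarith
    obtain ⟨σ, hσ⟩ := capelli_not_identity (n := n) (m := d * d) hkn
    exact hσ (hn hcap σ)
end

section
/- Let A be a noetherian ℂ-algebra of at most countable dimension. Then the Jacobson radical J(A) is nilpotent: there exists a constant C ∈ ℕ such that J(A)^C = 0. -/
section Auxiliary

variable {A : Type*} [Ring A]

local notation "J" => Ideal.jacobson (⊥ : Ideal A)

theorem J_mul_right {x : A} (hx : x ∈ J) (y : A) : x * y ∈ J :=
  (Ideal.jacobson (⊥ : Ideal A)).mul_mem_right y hx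

theorem exists_left_inv {j : A} (hj : j ∈ J) : ∃ z, z * (1 + j) = 1 := by
  obtain ⟨z, hz⟩ := Ideal.mem_jacobson_iff.mp hj 1
  rw [Ideal.mem_bot, sub_eq_zero, mul_one] at hz
  exact ⟨z, by rw [mul_add, mul_one, add_comm, hz]⟩

theorem isUnit_one_add {j : A} (hj : j ∈ J) : IsUnit (1 + j) := by
  obtain ⟨z, hz⟩ := exists_left_inv hj
  have hz' : z = 1 + -(z * j) := by
    have h2 := hz; rw [mul_add, mul_one] at h2
    linear_combination (norm := noncomm_ring) h2
  have hmem : -(z * j) ∈ J := neg_mem (Ideal.mul_mem_left _ z hj)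
  obtain ⟨w, hw⟩ := exists_left_inv hmem
  rw [← hz'] at hw
  have hwj : w = 1 + j := by
    calc w = w * (z * (1 + j)) := by rw [hz, mul_one]
    _ = (w * z) * (1 + j) := by rw [mul_assoc]
    _ = 1 + j := by rw [hw, one_mul]
  exact ⟨⟨1 + j, z, by rw [← hwj]; exact hw, hz⟩, rfl⟩

open Polynomial Cardinal

variable [Algebra ℂ A]

theorem isUnit_sub_z {a : A} (ha : a ∈ J) {z : ℂ} (hz : z ≠ 0) :
    IsUnit (a - algebraMap ℂ A z) := by
  have key : a - algebraMap ℂ A z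
      = algebraMap ℂ A (-z) * (1 + algebraMap ℂ A (-z⁻¹) * a) := by
    rw [mul_add, mul_one, ← mul_assoc, ← map_mul]
    rw [show (-z) * (-z⁻¹) = 1 by field_simp]
    simp [sub_eq_add_neg, add_comm]
  rw [key]
  exact ((algebraMap ℂ A).isUnit_map (Ne.isUnit (neg_ne_zero.mpr hz))).mul
    (isUnit_one_add (Ideal.mul_mem_left _ _ ha))

theorem amitsur (hcount : Module.rank ℂ A ≤ Cardinal.aleph0)
    {a : A} (ha : a ∈ J) : IsNilpotent a := by
  set f : {z : ℂ // z ≠ 0} → A := fun z => Ring.inverse (a - algebraMap ℂ A (z : ℂ)) with hf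
  -- the family f is not linearly independent
  have hcard : Cardinal.aleph0 < #{z : ℂ // z ≠ 0} := by
    have : #ℝ ≤ #{z : ℂ // z ≠ 0} := by
      refine Cardinal.mk_le_of_injective (f := fun t => ⟨(Real.exp t : ℂ), ?_⟩) ?_
      · exact_mod_cast (Real.exp_pos t).ne'
      · intro s t hst
        simp only [Subtype.mk.injEq, Complex.ofReal_inj] at hst
        exact Real.exp_injective hst
    calc Cardinal.aleph0 < 𝔠 := Cardinal.aleph0_lt_continuum
    _ = #ℝ := Cardinal.mk_real.symm
    _ ≤ _ := this
  have hnli : ¬ LinearIndependent ℂ f := by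
    intro hli
    have h2 := (hli.cardinal_lift_le_rank).trans (Cardinal.lift_le.mpr hcount)
    simp only [Cardinal.lift_aleph0, Cardinal.lift_le_aleph0] at h2
    exact absurd h2 (not_le.mpr hcard)
  
  rw [linearIndependent_iff'] at hnli
  push_neg at hnli
  obtain ⟨s, g, hsum, i₀, hi₀s, hgi₀⟩ := hnli
  -- the polynomial q kills a
  set q : ℂ[X] := ∑ i ∈ s, C (g i) * ∏ j ∈ s.erase i, (X - C (j : ℂ)) with hqdef
  have haev : ∀ z : ℂ, aeval a (X - C z) = a - algebraMap ℂ A z := by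
    intro z; simp [map_sub]
  have h1 : ∀ i ∈ s, f i * aeval a (∏ j ∈ s, (X - C (j : ℂ)))
      = aeval a (∏ j ∈ s.erase i, (X - C (j : ℂ))) := by
    intro i hi
    rw [← Finset.mul_prod_erase s _ hi, map_mul, ← mul_assoc, haev,
      Ring.inverse_mul_cancel _ (isUnit_sub_z ha i.2), one_mul]
  have hq0 : aeval a q = 0 := by
    have : aeval a q = (∑ i ∈ s, g i • f i) * aeval a (∏ j ∈ s, (X - C (j : ℂ))) := by
      rw [hqdef, map_sum, Finset.sum_mul]
      refine Finset.sum_congr rfl fun i hi => ?_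
      rw [map_mul, aeval_C, ← h1 i hi, smul_mul_assoc, Algebra.smul_def]
    rw [this, hsum, zero_mul]
  have hqne : q ≠ 0 := by
    have heval : q.eval (i₀ : ℂ) ≠ 0 := by
      rw [hqdef, eval_finset_sum]
      rw [Finset.sum_eq_single i₀]
      · simp only [eval_mul, eval_C, eval_prod, eval_sub, eval_X]
        refine mul_ne_zero hgi₀ (Finset.prod_ne_zero_iff.mpr fun j hj => ?_)
        rw [Finset.mem_erase] at hj
        exact sub_ne_zero.mpr fun h => hj.1 (Subtype.coe_injective h.symm)
      · intro i hi hne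
        simp only [eval_mul, eval_C, eval_prod, eval_sub, eval_X]
        refine mul_eq_zero_of_right _ (Finset.prod_eq_zero
          (Finset.mem_erase.mpr ⟨hne.symm, hi₀s⟩) ?_)
        rw [sub_self]
      · intro h; exact absurd hi₀s h
    intro h; rw [h] at heval; simp at heval
  -- extract the X-power
  obtain ⟨u, hqu, hnd⟩ := q.exists_eq_pow_rootMultiplicity_mul_and_not_dvd hqne 0
  rw [map_zero, sub_zero] at hqu hnd
  set c₀ := u.coeff 0 with hc₀
  have hc₀ne : c₀ ≠ 0 := fun h => hnd (Polynomial.X_dvd_iff.mpr h)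
  have hu : IsUnit (aeval a u) := by
    have hudec : aeval a u = algebraMap ℂ A c₀ *
        (1 + algebraMap ℂ A c₀⁻¹ * (a * aeval a u.divX)) := by
      conv_lhs => rw [← Polynomial.X_mul_divX_add u]
      rw [map_add, map_mul, aeval_X, aeval_C, mul_add, mul_one, ← mul_assoc, ← map_mul,
        mul_inv_cancel₀ hc₀ne, map_one, one_mul, add_comm]
    rw [hudec]
    exact ((algebraMap ℂ A).isUnit_map (Ne.isUnit hc₀ne)).mul
      (isUnit_one_add (Ideal.mul_mem_left _ _ (J_mul_right ha _)))
  refine ⟨q.rootMultiplicity 0, ?_⟩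
  have : a ^ q.rootMultiplicity 0 * aeval a u = 0 := by
    have h2 : aeval a (X ^ q.rootMultiplicity 0 * u) = 0 := by rw [← hqu, hq0]
    rwa [map_mul, map_pow, aeval_X] at h2
  calc a ^ q.rootMultiplicity 0
      = a ^ q.rootMultiplicity 0 * aeval a u * Ring.inverse (aeval a u) := by
        rw [Ring.mul_inverse_cancel_right _ _ hu]
    _ = 0 := by rw [this, zero_mul]

end Auxiliary

section Levitzki

variable {R : Type*} [Ring R]

/-- every product of `n` elements of `S` vanishes -/
def ProdZero (S : Set R) (n : ℕ) : Prop :=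
  ∀ l : List R, l.length = n → (∀ x ∈ l, x ∈ S) → l.prod = 0

def RightClosed (I : Ideal R) : Prop := ∀ x ∈ I, ∀ y, x * y ∈ I

theorem prodZero_pair {I M : Ideal R} (hIM : ∀ x ∈ I, ∀ y ∈ I, x * y ∈ M)
    {n : ℕ} (hM : ProdZero (M : Set R) n) : ProdZero (I : Set R) (2 * n) := by
  have key : ∀ (m : ℕ) (l : List R), l.length = 2 * m → (∀ x ∈ l, x ∈ I) →
      ∃ l' : List R, l'.length = m ∧ (∀ x ∈ l', x ∈ M) ∧ l'.prod = l.prod := by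
    intro m
    induction m with
    | zero => intro l hl _; exact ⟨[], rfl, by simp, by
        rw [List.length_eq_zero_iff.mp (by omega : l.length = 0)]⟩
    | succ k ih =>
      intro l hl hmem
      match l with
      | x :: y :: t =>
        simp only [List.length_cons] at hl
        obtain ⟨t', ht'len, ht'mem, ht'prod⟩ := ih t (by omega)
          (fun z hz => hmem z (by simp [hz]))
        refine ⟨(x * y) :: t', by simp [ht'len], ?_, ?_⟩
        · intro z hz
          rcases List.mem_cons.mp hz with h | h
          · subst h
            exact hIM x (hmem x (by simp)) y (hmem y (by simp))
          · exact ht'mem z h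
        · simp [List.prod_cons, ht'prod, mul_assoc]
  intro l hl hmem
  obtain ⟨l', h1, h2, h3⟩ := key n l hl hmem
  rw [← h3]; exact hM l' h1 h2

theorem prodZero_mono {S T : Set R} (h : S ⊆ T) {n : ℕ} (hT : ProdZero T n) :
    ProdZero S n := fun l hl hm => hT l hl (fun x hx => h (hm x hx))

open MulOpposite in
theorem levitzki [IsNoetherianRing R] {N : Ideal R} (hNr : RightClosed N)
    (hnil : ∀ x ∈ N, IsNilpotent x) : ∃ n, ProdZero (N : Set R) n := by
  classical
  have hmaxsets := set_has_maximal_iff_noetherian.mpr (inferInstance : IsNoetherian R R)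
  -- a maximal nilpotent right-closed ideal M
  obtain ⟨M, ⟨hMr, n, hMn⟩, hMmax⟩ := hmaxsets
    {I : Ideal R | RightClosed I ∧ ∃ n, ProdZero (I : Set R) n}
    ⟨⊥, fun x hx y => by simp_all, 1, fun l hl hm => by
      match l with
      | [x] => simpa using hm x (by simp)⟩
  suffices hsub : N ≤ M by
    exact ⟨n, prodZero_mono (fun x hx => hsub hx) hMn⟩
  by_contra hsub
  obtain ⟨b₁, hb₁N, hb₁M⟩ := SetLike.not_le_iff_exists.mp hsub
  -- left annihilator modulo M
  set ℓ : R → Ideal R := fun b =>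
    Submodule.comap (DistribMulAction.toLinearMap R (S := Rᵐᵒᵖ) R (op b)) M with hℓ
  have hℓmem : ∀ b x : R, x ∈ ℓ b ↔ x * b ∈ M := fun b x => Iff.rfl
  -- choose b₀ with maximal annihilator
  obtain ⟨L, ⟨b₀, hb₀N, hb₀M, hLb₀⟩, hLmax⟩ := hmaxsets
    {I : Ideal R | ∃ b ∈ N, b ∉ M ∧ ℓ b = I} ⟨ℓ b₁, b₁, hb₁N, hb₁M, rfl⟩
  subst hLb₀
  have key : ∀ x : R, b₀ * x * b₀ ∈ M := by
    intro x
    by_cases hbx : b₀ * x ∈ M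
    · exact hMr _ hbx b₀
    · set b := b₀ * x with hb
      have hbN : b ∈ N := hNr b₀ hb₀N x
      obtain ⟨m, hm⟩ := hnil b hbN
      have hex : ∃ k, b ^ (k + 1) ∈ M := ⟨m, by rw [pow_succ, hm, zero_mul]; exact M.zero_mem⟩
      set k := Nat.find hex with hk
      have hkmem : b ^ (k + 1) ∈ M := Nat.find_spec hex
      have hkpos : 1 ≤ k := by
        rcases Nat.eq_zero_or_pos k with h | h
        · exfalso; apply hbx; have := hkmem; rw [h] at this; simpa using this
        · exact h
      set c := b ^ k with hc
      have hcN : c ∈ N := by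
        have : c = b ^ (k - 1) * b := by rw [hc, ← pow_succ, Nat.sub_add_cancel hkpos]
        rw [this]; exact Ideal.mul_mem_left _ _ hbN
      have hcM : c ∉ M := by
        have := Nat.find_min hex (m := k - 1) (by omega)
        rwa [show k - 1 + 1 = k by omega] at this
      have hle : ℓ b₀ ≤ ℓ c := by
        intro y hy
        rw [hℓmem] at hy ⊢
        have hcb : c = b₀ * (x * b ^ (k - 1)) := by
          have hbk : b ^ k = b * b ^ (k - 1) := by
            conv_lhs => rw [show k = 1 + (k - 1) by omega, pow_add, pow_one]
          rw [hc, hbk, hb, mul_assoc]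
        rw [hcb, ← mul_assoc]
        exact hMr _ hy _
      have heq : ℓ b₀ = ℓ c := by
        by_contra hne
        exact hLmax (ℓ c) ⟨c, hcN, hcM, rfl⟩ (lt_of_le_of_ne hle hne)
      have hbc : b ∈ ℓ c := by rw [hℓmem, ← pow_succ']; exact hkmem
      rw [← heq, hℓmem] at hbc
      rwa [hb] at hbc
  -- the two-sided ideal generated by b₀ together with M
  set S : Ideal R := Submodule.span R (Set.range fun p : R × R => p.1 * (b₀ * p.2)) with hS
  have hb₀S : b₀ ∈ S := Submodule.subset_span ⟨(1, 1), by simp⟩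
  have hSr : RightClosed S := by
    intro s hs y
    induction hs using Submodule.span_induction with
    | mem g hg => obtain ⟨⟨p1, p2⟩, rfl⟩ := hg
                  exact Submodule.subset_span ⟨(p1, p2 * y), by simp [mul_assoc]⟩
    | zero => rw [zero_mul]; exact S.zero_mem
    | add a b _ _ ha hb => rw [add_mul]; exact S.add_mem ha hb
    | smul r a _ ha => rw [smul_eq_mul, mul_assoc]; exact S.smul_mem r ha
  have hgen : ∀ t ∈ S, ∀ x u : R, (x * (b₀ * u)) * t ∈ M := by
    intro t ht
    induction ht using Submodule.span_induction with
    | mem g hg =>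
      intro x u
      obtain ⟨⟨q1, q2⟩, rfl⟩ := hg
      have hexp : (x * (b₀ * u)) * ((fun p : R × R => p.1 * (b₀ * p.2)) (q1, q2))
          = x * ((b₀ * (u * q1) * b₀) * q2) := by noncomm_ring
      rw [hexp]
      exact Ideal.mul_mem_left _ _ (hMr _ (key (u * q1)) q2)
    | zero => intro x u; rw [mul_zero]; exact M.zero_mem
    | add a b _ _ ha hb => intro x u; rw [mul_add]; exact M.add_mem (ha x u) (hb x u)
    | smul r a _ ha =>
      intro x u
      have hexp : (x * (b₀ * u)) * (r • a) = (x * (b₀ * (u * r))) * a := by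
        rw [smul_eq_mul]; noncomm_ring
      rw [hexp]; exact ha x (u * r)
  have hSS : ∀ s ∈ S, ∀ t ∈ S, s * t ∈ M := by
    intro s hs
    induction hs using Submodule.span_induction with
    | mem g hg =>
      intro t ht
      obtain ⟨⟨p1, p2⟩, rfl⟩ := hg
      exact hgen t ht p1 p2
    | zero => intro t ht; rw [zero_mul]; exact M.zero_mem
    | add a b _ _ ha hb => intro t ht; rw [add_mul]; exact M.add_mem (ha t ht) (hb t ht)
    | smul r a _ ha =>
      intro t ht
      rw [smul_eq_mul, mul_assoc]
      exact Ideal.mul_mem_left _ _ (ha t ht)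
  have hII : ∀ x ∈ M ⊔ S, ∀ y ∈ M ⊔ S, x * y ∈ M := by
    intro x hx y hy
    obtain ⟨m, hm, a, ha, rfl⟩ := Submodule.mem_sup.mp hx
    obtain ⟨m', hm', a', ha', rfl⟩ := Submodule.mem_sup.mp hy
    have hexp : (m + a) * (m' + a') = m * m' + m * a' + (a * m' + a * a') := by noncomm_ring
    rw [hexp]
    exact M.add_mem (M.add_mem (hMr _ hm m') (hMr _ hm a'))
      (M.add_mem (Ideal.mul_mem_left _ _ hm') (hSS a ha a' ha'))
  have hIr : RightClosed (M ⊔ S) := by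
    intro x hx y
    obtain ⟨m, hm, a, ha, rfl⟩ := Submodule.mem_sup.mp hx
    rw [add_mul]
    exact Submodule.add_mem _ (Submodule.mem_sup_left (hMr _ hm y))
      (Submodule.mem_sup_right (hSr _ ha y))
  have hlt : M < M ⊔ S := lt_of_le_of_ne le_sup_left
    (fun h => hb₀M (by rw [h]; exact Submodule.mem_sup_right hb₀S))
  exact hMmax (M ⊔ S) ⟨hIr, 2 * n, prodZero_pair hII hMn⟩ hlt

end Levitzki

/-- The Jacobson radical of a noetherian `ℂ`-algebra of at most countable
dimension is nilpotent: `J(A)^C = 0` for some `C ∈ ℕ`. -/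
theorem stmt3 (A : Type*) [Ring A] [Algebra ℂ A] [IsNoetherianRing A]
    (hcount : Module.rank ℂ A ≤ Cardinal.aleph0) :
    ∃ C : ℕ, JacobsonPowZero A C := by
  obtain ⟨n, hn⟩ := levitzki (N := Ideal.jacobson (⊥ : Ideal A))
    (fun x hx y => J_mul_right hx y) (fun x hx => amitsur hcount hx)
  refine ⟨n, fun a ha => ?_⟩
  refine hn (List.ofFn a) (List.length_ofFn (f := a)) fun x hx => ?_
  obtain ⟨i, rfl⟩ := List.mem_ofFn.mp hx
  exact ha i
end

section
/- Let n be a positive integer and k ≥ n + 1. In the matrix algebra M_k(ℂ), one has s_{2n}(E_{1,1}, E_{1,2}, E_{2,2}, E_{2,3}, …, E_{n,n}, E_{n,n+1}) · E_{n+1,1} = E_{1,1}, where E_{i,j} denotes the matrix unit with 1 in position (i,j) and 0 elsewhere. In particular, this element is a nonzero idempotent of M_k(ℂ). -/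
lemma perm_chain_id (M : ℕ) (w : Equiv.Perm (Fin (M+1)))
    (hc : ∀ i : Fin M, ((w i.castSucc : ℕ) + 1) / 2 = (w i.succ : ℕ) / 2) :
    w = 1 := by
  have key : ∀ j : ℕ, ∀ h : j < M + 1, (w ⟨j, h⟩ : ℕ) = j := by
    intro j
    induction j using Nat.strong_induction_on with
    | _ j ih =>
      intro h
      set p := w.symm ⟨j, h⟩ with hp
      have hwp : w p = ⟨j, h⟩ := w.apply_symm_apply _
      rcases lt_trichotomy (p : ℕ) j with hlt | heq | hgt
      · exfalso
        have hv := ih (p : ℕ) hlt p.isLt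
        rw [Fin.eta, hwp] at hv
        simp only [Fin.val_mk] at hv
        omega
      · have : p = ⟨j, h⟩ := Fin.ext heq
        rw [this] at hwp
        rw [hwp]
      · exfalso
        have hp1 : (p : ℕ) - 1 < M := by omega
        have hq : ((p : ℕ) - 1) < M + 1 := by omega
        set u := (w ⟨(p : ℕ) - 1, hq⟩ : ℕ) with hu
        have hchain := hc ⟨(p : ℕ) - 1, hp1⟩
        have hcs : (Fin.castSucc ⟨(p : ℕ) - 1, hp1⟩ : Fin (M+1)) = ⟨(p : ℕ) - 1, hq⟩ := rfl
        have hsc : (Fin.succ ⟨(p : ℕ) - 1, hp1⟩ : Fin (M+1)) = p := by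
          apply Fin.ext; simp; omega
        rw [hcs, hsc, hwp] at hchain
        simp only [Fin.val_mk] at hchain
        -- hchain : (u + 1) / 2 = j / 2
        have hle : u ≤ j := by omega
        rcases eq_or_lt_of_le hle with heq2 | hlt2
        · -- u = j, so w at position p-1 equals w at p
          have : w ⟨(p : ℕ) - 1, hq⟩ = ⟨j, h⟩ := Fin.ext (by simpa using heq2)
          have := w.injective (this.trans hwp.symm)
          have : ((p : ℕ) - 1 : ℕ) = (p : ℕ) := congrArg Fin.val this
          omega
        · -- u < j, so by ih position u has value u
          have hiu : (w ⟨u, by omega⟩ : Fin (M+1)) = ⟨u, by omega⟩ :=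
            Fin.ext (ih u hlt2 (by omega))
          have : w ⟨(p : ℕ) - 1, hq⟩ = ⟨u, by omega⟩ := Fin.ext rfl
          have := w.injective (this.trans hiu.symm)
          have : ((p : ℕ) - 1 : ℕ) = u := congrArg Fin.val this
          omega
  apply Equiv.ext
  intro x
  exact Fin.ext (key x.1 x.2)

open Matrix

lemma chain_prod {k : ℕ} : ∀ (m : ℕ) (a b : Fin (m+1) → Fin k),
    (∀ i : Fin m, b i.castSucc = a i.succ) →
    (List.ofFn fun i => Matrix.single (a i) (b i) (1:ℂ)).prod
      = Matrix.single (a 0) (b (Fin.last m)) 1 := by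
  intro m
  induction m with
  | zero => intro a b _; simp
  | succ m ih =>
    intro a b hc
    rw [List.ofFn_succ]
    simp only [List.prod_cons]
    have h2 : (List.ofFn fun i : Fin (m+1) =>
        Matrix.single ((a ∘ Fin.succ) i) ((b ∘ Fin.succ) i) (1:ℂ)).prod
        = Matrix.single (a (Fin.succ 0)) (b (Fin.last (m+1))) 1 := by
      rw [ih (a ∘ Fin.succ) (b ∘ Fin.succ) (fun i => by
        simp only [Function.comp]
        rw [Fin.succ_castSucc]
        exact hc i.succ)]
      simp [Function.comp, Fin.succ_last]
    simp only [Function.comp] at h2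
    rw [h2]
    have hb : b 0 = a (Fin.succ 0) := by simpa using hc 0
    rw [hb]
    simp [Matrix.single_mul_single_same]

lemma break_prod {k : ℕ} : ∀ (m : ℕ) (a b : Fin (m+1) → Fin k) (i : Fin m),
    b i.castSucc ≠ a i.succ →
    (List.ofFn fun i => Matrix.single (a i) (b i) (1:ℂ)).prod = 0 := by
  intro m
  induction m with
  | zero => exact fun a b i => i.elim0
  | succ m ih =>
    intro a b i hi
    induction i using Fin.cases with
    | zero =>
      rw [List.ofFn_succ, List.ofFn_succ]
      simp only [List.prod_cons, ← mul_assoc]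
      rw [Matrix.single_mul_single_of_ne]
      · simp
      · simpa using hi
    | succ j =>
      rw [List.ofFn_succ]
      simp only [List.prod_cons]
      have h2 : (List.ofFn fun i : Fin (m+1) =>
          Matrix.single ((a ∘ Fin.succ) i) ((b ∘ Fin.succ) i) (1:ℂ)).prod = 0 := by
        apply ih (a ∘ Fin.succ) (b ∘ Fin.succ) j
        simp only [Function.comp]
        rw [Fin.succ_castSucc]
        exact hi
      simp only [Function.comp] at h2
      rw [h2, mul_zero]

open Matrix in
lemma main_eval (n k M : ℕ) (hn : 0 < n) (hk : n + 1 ≤ k) (hM : M + 1 = 2 * n) :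
    FreeAlgebra.lift ℤ
        (fun j : ℕ => Matrix.single
          (⟨min (j / 2) (k - 1), by omega⟩ : Fin k)
          (⟨min ((j + 1) / 2) (k - 1), by omega⟩ : Fin k) (1 : ℂ))
        (stdPoly (M + 1)) =
      Matrix.single (⟨0, by omega⟩ : Fin k) (⟨n, by omega⟩ : Fin k) (1 : ℂ) := by
  set σ : ℕ → Matrix (Fin k) (Fin k) ℂ := fun j => Matrix.single
      (⟨min (j / 2) (k - 1), by omega⟩ : Fin k)
      (⟨min ((j + 1) / 2) (k - 1), by omega⟩ : Fin k) (1 : ℂ) with hσ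
  have ha : ∀ i : Fin (M + 1), i.1 / 2 < k := fun i => by have := i.2; omega
  have hb : ∀ i : Fin (M + 1), (i.1 + 1) / 2 < k := fun i => by have := i.2; omega
  set a : Fin (M + 1) → Fin k := fun i => ⟨i.1 / 2, ha i⟩ with hadef
  set b : Fin (M + 1) → Fin k := fun i => ⟨(i.1 + 1) / 2, hb i⟩ with hbdef
  have hσ' : ∀ i : Fin (M + 1), σ (i : ℕ) = Matrix.single (a i) (b i) (1 : ℂ) := by
    intro i
    have h1 : min ((i : ℕ) / 2) (k - 1) = (i : ℕ) / 2 := by have := i.2; omega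
    have h2 : min (((i : ℕ) + 1) / 2) (k - 1) = ((i : ℕ) + 1) / 2 := by have := i.2; omega
    simp only [hσ, hadef, hbdef]
    exact congrArg₂ (fun p q => Matrix.single p q (1 : ℂ)) (Fin.ext h1) (Fin.ext h2)
  rw [stdPoly, map_sum]
  have hterm : ∀ w : Equiv.Perm (Fin (M + 1)),
      (FreeAlgebra.lift ℤ σ)
        (((Equiv.Perm.sign w : ℤˣ) : ℤ) •
          (List.ofFn fun i : Fin (M + 1) => FreeAlgebra.ι ℤ (w i : ℕ)).prod)
      = ((Equiv.Perm.sign w : ℤˣ) : ℤ) •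
          (List.ofFn fun i : Fin (M + 1) => Matrix.single (a (w i)) (b (w i)) (1 : ℂ)).prod := by
    intro w
    rw [map_zsmul]
    congr 1
    rw [map_list_prod, List.map_ofFn]
    exact congrArg List.prod (congrArg List.ofFn (funext fun i => by
      simp only [Function.comp]
      rw [FreeAlgebra.lift_ι_apply, hσ' (w i)]))
  rw [Finset.sum_congr rfl fun w _ => hterm w]
  rw [Finset.sum_eq_single 1]
  · have hchain : ∀ i : Fin M, b i.castSucc = a i.succ := fun i =>
      Fin.ext (by simp [hadef, hbdef])
    simp only [Equiv.Perm.coe_one, id_eq, Equiv.Perm.sign_one, Units.val_one, one_smul]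
    rw [chain_prod M a b hchain]
    have e1 : a 0 = (⟨0, by omega⟩ : Fin k) := Fin.ext (by simp [hadef])
    have e2 : b (Fin.last M) = (⟨n, by omega⟩ : Fin k) := Fin.ext (by
      simp [hbdef]
      omega)
    rw [e1, e2]
  · intro w _ hw
    have hzero : (List.ofFn fun i : Fin (M + 1) =>
        Matrix.single (a (w i)) (b (w i)) (1 : ℂ)).prod = 0 := by
      by_cases hch : ∀ i : Fin M, b (w i.castSucc) = a (w i.succ)
      · exfalso
        apply hw
        apply perm_chain_id
        intro i
        have := congrArg Fin.val (hch i)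
        simpa [hadef, hbdef] using this
      · push_neg at hch
        obtain ⟨i, hi⟩ := hch
        exact break_prod M (a ∘ w) (b ∘ w) i hi
    rw [hzero, smul_zero]
  · intro h
    exact absurd (Finset.mem_univ 1) h

/-- For `n ≥ 1` and `k ≥ n + 1`, in `M_k(ℂ)` one has
`s_{2n}(E_{1,1}, E_{1,2}, E_{2,2}, E_{2,3}, …, E_{n,n}, E_{n,n+1}) ⋅ E_{n+1,1} = E_{1,1}`;
in particular this element is a nonzero idempotent.  (Indices are 0-based in the
formalization: the `j`-th indeterminate, `0 ≤ j ≤ 2n - 1`, is sent to the matrix unit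
`E_{⌊j/2⌋, ⌊(j+1)/2⌋}`, which realizes the listed sequence of matrix units.) -/
theorem stmt6 (n k : ℕ) (hn : 0 < n) (hk : n + 1 ≤ k) :
    FreeAlgebra.lift ℤ
        (fun j : ℕ => Matrix.single
          (⟨min (j / 2) (k - 1), by omega⟩ : Fin k)
          (⟨min ((j + 1) / 2) (k - 1), by omega⟩ : Fin k) (1 : ℂ))
        (stdPoly (2 * n)) *
      Matrix.single (⟨n, by omega⟩ : Fin k) (⟨0, by omega⟩ : Fin k) (1 : ℂ) =
      Matrix.single (⟨0, by omega⟩ : Fin k) (⟨0, by omega⟩ : Fin k) (1 : ℂ) ∧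
    Matrix.single (⟨0, by omega⟩ : Fin k) (⟨0, by omega⟩ : Fin k) (1 : ℂ) *
        Matrix.single (⟨0, by omega⟩ : Fin k) (⟨0, by omega⟩ : Fin k) (1 : ℂ) =
      Matrix.single (⟨0, by omega⟩ : Fin k) (⟨0, by omega⟩ : Fin k) (1 : ℂ) ∧
    Matrix.single (⟨0, by omega⟩ : Fin k) (⟨0, by omega⟩ : Fin k) (1 : ℂ) ≠ 0 := by

  obtain ⟨M, hM⟩ : ∃ M, M + 1 = 2 * n := ⟨2 * n - 1, by omega⟩
  refine ⟨?_, ?_, ?_⟩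
  · rw [← hM, main_eval n k M hn hk hM, Matrix.single_mul_single_same]
    norm_num
  · rw [Matrix.single_mul_single_same]
    norm_num
  · intro h
    have h2 := congrFun (congrFun h (⟨0, by omega⟩ : Fin k)) (⟨0, by omega⟩ : Fin k)
    simp [Matrix.single_apply_same] at h2
end
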